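/- Let T be a pretriangulated category, let (A, B, C, u, v, w) and (A', B', C', u', v', w') be distinguished triangles, and let a : A → A' and b : B → B' be morphisms with b ∘ u = u' ∘ a. If Hom_T(A, C'⟦-1⟧) = 0, then there exists a unique morphism c : C → C' such that (a, b, c) is a morphism of distinguished triangles. (The uniqueness statement (BBD, Proposition 1.1.9) used repeatedly in Section 3 of the paper.) -/

import Mathlib

open CategoryTheory CategoryTheory.Limits CategoryTheory.Pretriangulated

/-- BBD, Proposition 1.1.9: a commutative square between the first morphisms of two
distinguished triangles extends to a morphism of triangles, uniquely if
Hom(A, C'⟦-1⟧) = 0. -/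
theorem unique_extension_of_triangle_morphism
    (T : Type*) [Category T] [Preadditive T] [HasZeroObject T] [HasBinaryBiproducts T]
    [HasShift T ℤ] [∀ n : ℤ, (shiftFunctor T n).Additive] [Pretriangulated T]
    (A B C A' B' C' : T)
    (u : A ⟶ B) (v : B ⟶ C) (w : C ⟶ A⟦(1:ℤ)⟧)
    (u' : A' ⟶ B') (v' : B' ⟶ C') (w' : C' ⟶ A'⟦(1:ℤ)⟧)
    (hT : Triangle.mk u v w ∈ distTriang T)
    (hT' : Triangle.mk u' v' w' ∈ distTriang T)
    (a : A ⟶ A') (b : B ⟶ B') (hcomm : u ≫ b = a ≫ u')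
    (hzero : ∀ φ : A ⟶ C'⟦(-1:ℤ)⟧, φ = 0) :
    ∃! c : C ⟶ C', v ≫ c = b ≫ v' ∧ w ≫ a⟦(1:ℤ)⟧' = c ≫ w' := by
  obtain ⟨c, hc₁, hc₂⟩ := complete_distinguished_triangle_morphism _ _ hT hT' a b hcomm
  dsimp only [Triangle.mk] at c hc₁ hc₂
  refine ⟨c, ⟨hc₁, hc₂⟩, ?_⟩
  rintro c' ⟨hc'₁, hc'₂⟩
  suffices h : c' - c = 0 by rw [← sub_eq_zero]; exact h
  obtain ⟨e, he⟩ := Triangle.yoneda_exact₃ _ hT (c' - c)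
    (by change v ≫ (c' - c) = 0; rw [Preadditive.comp_sub, hc₁, hc'₁, sub_self])
  have he0 : e = 0 := by
    have : (shiftFunctor T (-1:ℤ)).map e = 0 := by
      have := hzero ((shiftFunctorCompIsoId T (1:ℤ) (-1:ℤ) (by omega)).inv.app A ≫
        (shiftFunctor T (-1:ℤ)).map e)
      exact (cancel_epi ((shiftFunctorCompIsoId T (1:ℤ) (-1:ℤ) (by omega)).inv.app A)).1
        (this.trans comp_zero.symm)
    exact (shiftFunctor T (-1:ℤ)).map_injective (by rw [this, Functor.map_zero])
  rw [he, he0]; exact comp_zero
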